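/- Let A be an n×n real symmetric positive semidefinite matrix with eigenvalues λ_1 ≥ λ_2 ≥ … ≥ λ_n ≥ 0 and orthonormal eigenvectors e_1,…,e_n, and suppose λ_q > λ_{q+1} > 0. Define the preconditioned matrix P·A where P := I − Σ_{i=1}^q (1 − λ_{q+1}/λ_i) e_i e_iᵀ. Then P·A is symmetric positive semidefinite with largest eigenvalue λ_{q+1}; specifically, P·A has eigenvalues λ_{q+1} (with multiplicity at least q from the top directions, as PA e_i = λ_{q+1} e_i for i ≤ q) and λ_i for i > q. -/

import Mathlib

open Matrix

private lemma vmv_mulVec {n : ℕ} (u v w : Fin n → ℝ) :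
    vecMulVec u v *ᵥ w = (v ⬝ᵥ w) • u := by
  funext k
  simp only [mulVec, dotProduct, vecMulVec_apply, Pi.smul_apply, smul_eq_mul,
    Finset.sum_mul]
  exact Finset.sum_congr rfl fun j _ => by ring

private lemma vmv_mul_vmv {n : ℕ} (u v w x : Fin n → ℝ) :
    vecMulVec u v * vecMulVec w x = (v ⬝ᵥ w) • vecMulVec u x := by
  ext i j
  simp only [mul_apply, vecMulVec_apply, Matrix.smul_apply, dotProduct, smul_eq_mul,
    Finset.sum_mul]
  exact Finset.sum_congr rfl fun k _ => by ring

private lemma sum_mulVec' {n : ℕ} {ι : Type*} (s : Finset ι)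
    (M : ι → Matrix (Fin n) (Fin n) ℝ) (v : Fin n → ℝ) :
    (∑ i ∈ s, M i) *ᵥ v = ∑ i ∈ s, M i *ᵥ v := by
  funext k
  simp only [mulVec, dotProduct, Matrix.sum_apply, Finset.sum_apply, Finset.sum_mul]
  rw [Finset.sum_comm]

private lemma dotProduct_sum' {n : ℕ} {ι : Type*} (s : Finset ι)
    (x : Fin n → ℝ) (f : ι → Fin n → ℝ) :
    x ⬝ᵥ (∑ i ∈ s, f i) = ∑ i ∈ s, x ⬝ᵥ f i := by
  simp only [dotProduct, Finset.sum_apply, Finset.mul_sum]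
  rw [Finset.sum_comm]

theorem stmt7 {n : ℕ} (q : ℕ) (hq0 : 0 < q) (hq : q < n)
    (lam : Fin n → ℝ) (e : Fin n → Fin n → ℝ)
    (horth : ∀ i j, e i ⬝ᵥ e j = if i = j then (1 : ℝ) else 0)
    (hmono : ∀ i j : Fin n, i ≤ j → lam j ≤ lam i)
    (hnonneg : ∀ i, 0 ≤ lam i)
    (hgap : lam ⟨q, hq⟩ < lam ⟨q - 1, by omega⟩)
    (hpos : 0 < lam ⟨q, hq⟩)
    (A : Matrix (Fin n) (Fin n) ℝ)
    (hA : A = ∑ i, lam i • vecMulVec (e i) (e i)) :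
    let P : Matrix (Fin n) (Fin n) ℝ :=
      1 - ∑ i ∈ Finset.univ.filter (fun i : Fin n => (i : ℕ) < q),
        (1 - lam ⟨q, hq⟩ / lam i) • vecMulVec (e i) (e i)
    (P * A).PosSemidef ∧
      (∀ i : Fin n, (i : ℕ) < q → (P * A) *ᵥ e i = lam ⟨q, hq⟩ • e i) ∧
      (∀ i : Fin n, q ≤ (i : ℕ) → (P * A) *ᵥ e i = lam i • e i) ∧
      (∀ i : Fin n, q ≤ (i : ℕ) → lam i ≤ lam ⟨q, hq⟩) := by
  intro P
  set lq : ℝ := lam ⟨q, hq⟩ with hlq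
  set μ : Fin n → ℝ := fun i => if (i : ℕ) < q then lq else lam i with hμ
  have hposi : ∀ i : Fin n, (i : ℕ) < q → 0 < lam i := by
    intro i hi
    have h1 : lam ⟨q - 1, by omega⟩ ≤ lam i :=
      hmono i ⟨q - 1, by omega⟩ (by simp only [Fin.le_def]; omega)
    linarith
  -- E_i * A = lam i • E_i
  have hEA : ∀ i : Fin n, vecMulVec (e i) (e i) * A = lam i • vecMulVec (e i) (e i) := by
    intro i
    rw [hA, Finset.mul_sum]
    rw [Finset.sum_eq_single i]
    · rw [mul_smul_comm, vmv_mul_vmv, horth, if_pos rfl, one_smul]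
    · intro j _ hji
      rw [mul_smul_comm, vmv_mul_vmv, horth, if_neg (Ne.symm hji), zero_smul, smul_zero]
    · intro h; exact absurd (Finset.mem_univ i) h
  -- P * A = ∑ μ i • E_i
  have hPA : P * A = ∑ i, μ i • vecMulVec (e i) (e i) := by
    show (1 - _) * A = _
    rw [sub_mul, one_mul, Finset.sum_mul]
    have h1 : ∀ i ∈ Finset.univ.filter (fun i : Fin n => (i : ℕ) < q),
        ((1 - lq / lam i) • vecMulVec (e i) (e i)) * A
          = ((1 - lq / lam i) * lam i) • vecMulVec (e i) (e i) := by
      intro i _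
      rw [smul_mul_assoc, hEA, smul_smul]
    rw [Finset.sum_congr rfl h1, Finset.sum_filter]
    rw [hA, ← Finset.sum_sub_distrib]
    refine Finset.sum_congr rfl fun i _ => ?_
    by_cases hi : (i : ℕ) < q
    · rw [if_pos hi, ← sub_smul]
      have : μ i = lq := by simp only [hμ]; rw [if_pos hi]
      rw [this]
      congr 1
      have := (hposi i hi).ne'
      field_simp
      ring
    · rw [if_neg hi, sub_zero]
      have : μ i = lam i := by simp only [hμ]; rw [if_neg hi]
      rw [this]
  -- mulVec on eigenvectors
  have hmv : ∀ j : Fin n, (P * A) *ᵥ e j = μ j • e j := by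
    intro j
    rw [hPA, sum_mulVec']
    rw [Finset.sum_eq_single j]
    · rw [smul_mulVec, vmv_mulVec, horth, if_pos rfl, one_smul]
    · intro i _ hij
      rw [smul_mulVec, vmv_mulVec, horth, if_neg hij, zero_smul, smul_zero]
    · intro h; exact absurd (Finset.mem_univ j) h
  have hμnn : ∀ i, 0 ≤ μ i := by
    intro i
    by_cases hi : (i : ℕ) < q
    · simp only [hμ, if_pos hi]; exact le_of_lt hpos
    · simp only [hμ, if_neg hi]; exact hnonneg i
  refine ⟨posSemidef_iff_dotProduct_mulVec.mpr ⟨?_, ?_⟩, ?_, ?_, ?_⟩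
  · -- Hermitian
    show (P * A)ᴴ = P * A
    rw [hPA]
    ext i j
    simp only [conjTranspose_apply, Matrix.sum_apply, Matrix.smul_apply, vecMulVec_apply,
      smul_eq_mul, star_trivial]
    exact Finset.sum_congr rfl fun k _ => by ring
  · -- PSD
    intro x
    rw [star_trivial, hPA, sum_mulVec', dotProduct_sum']
    refine Finset.sum_nonneg fun i _ => ?_
    rw [smul_mulVec, vmv_mulVec, smul_smul, dotProduct_smul, smul_eq_mul,
      dotProduct_comm]
    nlinarith [hμnn i, mul_self_nonneg (x ⬝ᵥ e i)]
  · intro i hi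
    rw [hmv i]
    simp only [hμ, if_pos hi, hlq]
  · intro i hi
    rw [hmv i]
    simp only [hμ, not_lt.mpr hi, if_neg, if_false]
  · intro i hi
    exact hmono ⟨q, hq⟩ i (by simp only [Fin.le_def]; omega)
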